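/- Let σ and τ be positive semidefinite matrices on a finite-dimensional complex Hilbert space with tr(σ) ≥ 1, tr(τ) = 1, and rank(τ) ≤ r. Then ‖σ − τ‖₁ ≥ 2 − 2r·‖σ‖_∞, where ‖X‖₁ = tr√(X†X) is the trace norm and ‖σ‖_∞ is the operator norm (largest eigenvalue of σ). -/

import Mathlib

open MeasureTheory Matrix BigOperators Finset
open scoped ComplexOrder

noncomputable section

section Prelude

variable {n : Type*} [Fintype n] [DecidableEq n]

/-- The positive semidefinite square root of a positive semidefinite matrix
(the definition `Matrix.PosSemidef.sqrt` of the older Mathlib, removed since). -/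
def Matrix.PosSemidef.sqrt {A : Matrix n n ℂ} (hA : A.PosSemidef) : Matrix n n ℂ :=
  hA.1.eigenvectorUnitary.1 * diagonal ((↑) ∘ (√·) ∘ hA.1.eigenvalues) *
  (star hA.1.eigenvectorUnitary : Matrix n n ℂ)

/-- The inner product `⟨u|A|v⟩ = Σᵢⱼ conj(uᵢ) Aᵢⱼ vⱼ`. -/
def braket (A : Matrix n n ℂ) (u v : n → ℂ) : ℂ :=
  ∑ i, ∑ j, (starRingEnd ℂ) (u i) * A i j * v j

/-- `μ` is the Haar measure on unit vectors: a probability measure supported on the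
unit sphere that is invariant under every unitary. -/
def IsHaarUnit (μ : Measure (n → ℂ)) : Prop :=
  IsProbabilityMeasure μ ∧
  (∀ᵐ φ ∂μ, ∑ i, Complex.normSq (φ i) = 1) ∧
  ∀ U ∈ Matrix.unitaryGroup n ℂ, Measure.map (fun φ => U.mulVec φ) μ = μ

/-- `r_φ = d ⟨φ|ρ|φ⟩`. -/
def rphi (ρ : Matrix n n ℂ) (φ : n → ℂ) : ℝ :=
  (Fintype.card n : ℝ) * (braket ρ φ φ).re

/-- The Scrooge (ρ-distorted) state `√(dρ) φ / √(r_φ)`. -/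
def scroogeVec {ρ : Matrix n n ℂ} (hρ : ρ.PosSemidef) (φ : n → ℂ) : n → ℂ :=
  ((Real.sqrt (Fintype.card n) / Real.sqrt (rphi ρ φ) : ℝ) : ℂ) • hρ.sqrt.mulVec φ

/-- Scrooge-ensemble expectation of a real function of the pure state:
`E_{ψ∼S_ρ}[f(ψ)] = ∫ dμ_Haar(φ) r_φ f(√(dρ)φ/√(r_φ))`. -/
def scroogeExp (μ : Measure (n → ℂ)) {ρ : Matrix n n ℂ} (hρ : ρ.PosSemidef)
    (f : (n → ℂ) → ℝ) : ℝ :=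
  ∫ φ, rphi ρ φ * f (scroogeVec hρ φ) ∂μ

/-- The largest eigenvalue of a Hermitian matrix. -/
def maxEig {A : Matrix n n ℂ} (hA : A.IsHermitian) : ℝ := ⨆ i, hA.eigenvalues i

/-- Min-entropy `S_∞ = -log₂ ‖A‖_∞`. -/
def Sinf {A : Matrix n n ℂ} (hA : A.IsHermitian) : ℝ := -Real.logb 2 (maxEig hA)

/-- The `k`-fold tensor (Kronecker) power of a matrix, on index type `Fin k → n`. -/
def tpow (A : Matrix n n ℂ) (k : ℕ) : Matrix (Fin k → n) (Fin k → n) ℂ :=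
  fun x y => ∏ i, A (x i) (y i)

/-- Tensor product of a family of matrices, on index type `Fin k → n`. -/
def tpowFam {k : ℕ} (A : Fin k → Matrix n n ℂ) :
    Matrix (Fin k → n) (Fin k → n) ℂ :=
  fun x y => ∏ i, A i (x i) (y i)

/-- The operator `P_π` permuting tensor factors: `P_π (v₁⊗⋯⊗v_k) = v_{π⁻¹(1)}⊗⋯⊗v_{π⁻¹(k)}`. -/
def permMat (n : Type*) [DecidableEq n] (k : ℕ) (π : Equiv.Perm (Fin k)) :
    Matrix (Fin k → n) (Fin k → n) ℂ :=
  fun x y => if (fun i => x (π i)) = y then 1 else 0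

/-- Loewner order: `A ⪯ B` iff `B - A` is positive semidefinite. -/
def matLE {m : Type*} [Fintype m] (A B : Matrix m m ℂ) : Prop := (B - A).PosSemidef

/-- The trace norm `‖X‖₁ = tr √(XᴴX)`. -/
def traceNorm (X : Matrix n n ℂ) : ℝ :=
  ((Matrix.posSemidef_conjTranspose_mul_self X).sqrt.trace).re

/-- The operator (spectral) norm `‖X‖_∞ = √(max eig (XᴴX))`. -/
def opNorm (X : Matrix n n ℂ) : ℝ :=
  Real.sqrt (maxEig (Matrix.posSemidef_conjTranspose_mul_self X).1)

/-- k-th moment of the Scrooge ensemble, `χ^{(k)}_{S_ρ} = E_{ψ∼S_ρ}[(|ψ⟩⟨ψ|)^{⊗k}]`,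
computed entrywise. -/
def scroogeMoment (μ : Measure (n → ℂ)) {ρ : Matrix n n ℂ} (hρ : ρ.PosSemidef) (k : ℕ) :
    Matrix (Fin k → n) (Fin k → n) ℂ :=
  fun x y => ∫ φ, ((rphi ρ φ : ℝ) : ℂ) *
    ∏ i, (scroogeVec hρ φ (x i) * (starRingEnd ℂ) (scroogeVec hρ φ (y i))) ∂μ

end Prelude

section MainProof

variable {n : Type*} [Fintype n] [DecidableEq n]

lemma diag_re_nonneg {M : Matrix n n ℂ} (hM : M.PosSemidef) (i : n) : 0 ≤ (M i i).re := by
  have h := hM.re_dotProduct_nonneg (Pi.single i 1)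
  simpa [dotProduct, mulVec, Pi.single_apply, Finset.sum_ite_eq] using h

lemma sandwich (U : Matrix n n ℂ) (hU : star U * U = 1) (f g : n → ℂ) :
    (U * diagonal f * star U) * (U * diagonal g * star U)
      = U * diagonal (fun i => f i * g i) * star U := by
  have h2 : ∀ Y : Matrix n n ℂ, star U * (U * Y) = Y := fun Y => by
    rw [← Matrix.mul_assoc, hU, Matrix.one_mul]
  calc (U * diagonal f * star U) * (U * diagonal g * star U)
      = U * (diagonal f * (star U * (U * (diagonal g * star U)))) := by
        simp only [Matrix.mul_assoc]
    _ = U * (diagonal f * (diagonal g * star U)) := by rw [h2]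
    _ = U * diagonal (fun i => f i * g i) * star U := by
        rw [show diagonal f * (diagonal g * star U) = diagonal f * diagonal g * star U from
          (Matrix.mul_assoc _ _ _).symm, diagonal_mul_diagonal, ← Matrix.mul_assoc]

lemma trace_diag_mul (d : n → ℂ) (X : Matrix n n ℂ) :
    (diagonal d * X).trace = ∑ i, d i * X i i := by
  simp [Matrix.trace, Matrix.diag, diagonal_mul]

lemma trace_mul_conj_diag (A V : Matrix n n ℂ) (d : n → ℂ) :
    (A * (V * diagonal d * star V)).trace = ∑ i, d i * (star V * A * V) i i := by
  rw [trace_mul_comm]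
  have h1 : (V * diagonal d * star V) * A = V * (diagonal d * (star V * A)) := by
    simp only [Matrix.mul_assoc]
  rw [h1, trace_mul_comm]
  have h2 : diagonal d * (star V * A) * V = diagonal d * (star V * A * V) := by
    simp only [Matrix.mul_assoc]
  rw [h2, trace_diag_mul]

open scoped Matrix.Norms.L2Operator MatrixOrder in
lemma psd_sqrt_unique' {A S : Matrix n n ℂ} (hA : A.PosSemidef) (hS : S.PosSemidef)
    (h : S ^ 2 = A) : S = hA.sqrt := by
  set U : Matrix n n ℂ := (hA.1.eigenvectorUnitary : Matrix n n ℂ) with hUdef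
  have hUU : star U * U = 1 := mem_unitaryGroup_iff'.mp hA.1.eigenvectorUnitary.2
  have hRpsd : hA.sqrt.PosSemidef := by
    unfold Matrix.PosSemidef.sqrt
    rw [star_eq_conjTranspose]
    exact (posSemidef_diagonal_iff.mpr fun i =>
      Complex.zero_le_real.mpr (Real.sqrt_nonneg _)).mul_mul_conjTranspose_same _
  have hR2 : hA.sqrt ^ 2 = A := by
    unfold Matrix.PosSemidef.sqrt
    rw [pow_two, sandwich U hUU]
    conv_rhs => rw [hA.1.spectral_theorem, Unitary.conjStarAlgAut_apply]
    refine congrArg (fun d => U * diagonal d * star U) ?_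
    funext i
    simp only [Function.comp_apply]
    rw [← Complex.ofReal_mul, Real.mul_self_sqrt (hA.eigenvalues_nonneg i)]
    rfl
  exact (CFC.sq_eq_sq_iff S hA.sqrt hS.nonneg hRpsd.nonneg).mp (h.trans hR2.symm)

lemma traceNorm_eq_sum_abs {X : Matrix n n ℂ} (hX : X.IsHermitian) :
    traceNorm X = ∑ i, |hX.eigenvalues i| := by
  set U : Matrix n n ℂ := (hX.eigenvectorUnitary : Matrix n n ℂ) with hUdef
  have hUU : star U * U = 1 := mem_unitaryGroup_iff'.mp hX.eigenvectorUnitary.2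
  set S : Matrix n n ℂ := U * diagonal (fun i => ((|hX.eigenvalues i| : ℝ) : ℂ)) * star U with hSdef
  have hSpsd : S.PosSemidef := by
    rw [hSdef, star_eq_conjTranspose]
    exact (posSemidef_diagonal_iff.mpr fun i =>
      Complex.zero_le_real.mpr (abs_nonneg _)).mul_mul_conjTranspose_same U
  have hsq : S ^ 2 = Xᴴ * X := by
    rw [pow_two, hX.eq, hSdef, sandwich U hUU]
    conv_rhs => rw [hX.spectral_theorem, Unitary.conjStarAlgAut_apply, sandwich U hUU]
    have hfg : (fun i => ((|hX.eigenvalues i| : ℝ) : ℂ) * ((|hX.eigenvalues i| : ℝ) : ℂ))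
        = fun i => (RCLike.ofReal ∘ hX.eigenvalues) i * (RCLike.ofReal ∘ hX.eigenvalues) i := by
      funext i
      simp only [Function.comp_apply, ← Complex.ofReal_mul, abs_mul_abs_self]
      norm_cast
    rw [hfg]
  have hS : S = (Matrix.posSemidef_conjTranspose_mul_self X).sqrt :=
    psd_sqrt_unique' _ hSpsd hsq
  rw [traceNorm, ← hS, hSdef]
  rw [trace_mul_comm]
  have h1 : star U * (U * diagonal (fun i => ((|hX.eigenvalues i| : ℝ) : ℂ))) =
      diagonal (fun i => ((|hX.eigenvalues i| : ℝ) : ℂ)) := by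
    rw [← Matrix.mul_assoc, hUU, Matrix.one_mul]
  rw [h1, trace_diagonal]
  simp

lemma re_trace_mul_le {X M : Matrix n n ℂ} (hX : X.IsHermitian)
    (h1 : (1 - M).PosSemidef) (h2 : (1 + M).PosSemidef) :
    ((X * M).trace).re ≤ traceNorm X := by
  set U : Matrix n n ℂ := (hX.eigenvectorUnitary : Matrix n n ℂ) with hUdef
  have hUU : star U * U = 1 := mem_unitaryGroup_iff'.mp hX.eigenvectorUnitary.2
  set N : Matrix n n ℂ := star U * M * U with hNdef
  have htr : (X * M).trace = ∑ i, ((hX.eigenvalues i : ℝ) : ℂ) * N i i := by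
    conv_lhs => rw [hX.spectral_theorem, Unitary.conjStarAlgAut_apply]
    have e1 : U * diagonal (RCLike.ofReal ∘ hX.eigenvalues) * star U * M
        = U * (diagonal (RCLike.ofReal ∘ hX.eigenvalues) * (star U * M)) := by
      simp only [Matrix.mul_assoc]
    rw [e1, trace_mul_comm]
    have e2 : diagonal (RCLike.ofReal ∘ hX.eigenvalues) * (star U * M) * U
        = diagonal (RCLike.ofReal ∘ hX.eigenvalues) * N := by
      simp only [hNdef, Matrix.mul_assoc]
    rw [e2, trace_diag_mul]
    rfl
  have hbound : ∀ i, |(N i i).re| ≤ 1 := by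
    intro i
    have hc1 : (star U * (1 - M) * U).PosSemidef := by
      rw [star_eq_conjTranspose]
      exact h1.conjTranspose_mul_mul_same U
    have hc2 : (star U * (1 + M) * U).PosSemidef := by
      rw [star_eq_conjTranspose]
      exact h2.conjTranspose_mul_mul_same U
    have e1 : star U * (1 - M) * U = 1 - N := by
      rw [Matrix.mul_sub, Matrix.mul_one, Matrix.sub_mul, hUU, hNdef]
    have e2 : star U * (1 + M) * U = 1 + N := by
      rw [Matrix.mul_add, Matrix.mul_one, Matrix.add_mul, hUU, hNdef]
    have b1 := diag_re_nonneg hc1 i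
    have b2 := diag_re_nonneg hc2 i
    rw [e1] at b1; rw [e2] at b2
    simp only [Matrix.sub_apply, Matrix.add_apply, Matrix.one_apply_eq, Complex.sub_re,
      Complex.add_re, Complex.one_re] at b1 b2
    rw [abs_le]; constructor <;> linarith
  rw [traceNorm_eq_sum_abs hX, htr]
  rw [Complex.re_sum]
  refine Finset.sum_le_sum fun i _ => ?_
  rw [Complex.re_ofReal_mul]
  calc hX.eigenvalues i * (N i i).re ≤ |hX.eigenvalues i * (N i i).re| := le_abs_self _
    _ = |hX.eigenvalues i| * |(N i i).re| := abs_mul _ _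
    _ ≤ |hX.eigenvalues i| * 1 := by
        exact mul_le_mul_of_nonneg_left (hbound i) (abs_nonneg _)
    _ = _ := mul_one _


end MainProof

/-- `‖σ - τ‖₁ ≥ 2 - 2 r ‖σ‖_∞` when `tr σ ≥ 1`, `tr τ = 1`
and `rank τ ≤ r`. -/
theorem traceNorm_lower_bound_rank
    {n : Type*} [Fintype n] [DecidableEq n]
    (σ τ : Matrix n n ℂ) (hσ : σ.PosSemidef) (hτ : τ.PosSemidef)
    (hσtr : 1 ≤ σ.trace.re) (hτtr : τ.trace = 1)
    (r : ℕ) (hrank : τ.rank ≤ r) :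
    2 - 2 * (r : ℝ) * maxEig hσ.1 ≤ traceNorm (σ - τ) := by
  classical
  -- n is nonempty
  have hne : Nonempty n := by
    by_contra h
    rw [not_nonempty_iff] at h
    have : σ.trace = 0 := by simp [Matrix.trace]
    rw [this] at hσtr
    norm_num at hσtr
  set c : ℝ := maxEig hσ.1 with hcdef
  have hc : ∀ i, hσ.1.eigenvalues i ≤ c :=
    fun i => le_ciSup (Set.finite_range _).bddAbove i
  have hc0 : 0 ≤ c :=
    le_trans (hσ.eigenvalues_nonneg (Classical.arbitrary n)) (hc _)
  -- spectral data of τ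
  set V : Matrix n n ℂ := (hτ.1.eigenvectorUnitary : Matrix n n ℂ) with hVdef
  have hVV : star V * V = 1 := mem_unitaryGroup_iff'.mp hτ.1.eigenvectorUnitary.2
  have hVV' : V * star V = 1 := mem_unitaryGroup_iff.mp hτ.1.eigenvectorUnitary.2
  set e : n → ℝ := hτ.1.eigenvalues with hedef
  set ind : n → ℝ := fun i => if e i = 0 then 0 else 1 with hinddef
  set P : Matrix n n ℂ := V * diagonal (fun i => ((ind i : ℝ) : ℂ)) * star V with hPdef
  have hP : P.PosSemidef := by
    rw [hPdef, star_eq_conjTranspose]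
    refine (posSemidef_diagonal_iff.mpr fun i => Complex.zero_le_real.mpr ?_).mul_mul_conjTranspose_same V
    by_cases h : e i = 0 <;> simp [hinddef, h]
  have hone : (1 : Matrix n n ℂ) = V * diagonal (fun _ => (1:ℂ)) * star V := by
    rw [diagonal_one, Matrix.mul_one, hVV']
  have h1P : (1 : Matrix n n ℂ) - P = V * diagonal (fun i => ((1 - ind i : ℝ) : ℂ)) * star V := by
    rw [hone, hPdef, ← Matrix.sub_mul, ← Matrix.mul_sub, diagonal_sub]
    congr 2
    funext i
    push_cast
    ring
  have h1Ppsd : ((1 : Matrix n n ℂ) - P).PosSemidef := by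
    rw [h1P, star_eq_conjTranspose]
    refine (posSemidef_diagonal_iff.mpr fun i => Complex.zero_le_real.mpr ?_).mul_mul_conjTranspose_same V
    by_cases h : e i = 0 <;> simp [hinddef, h]
  set M : Matrix n n ℂ := 1 - (P + P) with hMdef
  have hM1 : ((1 : Matrix n n ℂ) - M).PosSemidef := by
    have : (1 : Matrix n n ℂ) - M = P + P := by rw [hMdef, sub_sub_cancel]
    rw [this]; exact hP.add hP
  have hM2 : ((1 : Matrix n n ℂ) + M).PosSemidef := by
    have : (1 : Matrix n n ℂ) + M = (1 - P) + (1 - P) := by rw [hMdef]; abel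
    rw [this]; exact h1Ppsd.add h1Ppsd
  have key := re_trace_mul_le (hσ.1.sub hτ.1) hM1 hM2
  -- compute trace (τ * P) = 1
  have hτdiag : star V * τ * V = diagonal (RCLike.ofReal ∘ e) := by
    rw [star_eq_conjTranspose]
    have h := hτ.1.conjStarAlgAut_star_eigenvectorUnitary
    rw [Unitary.conjStarAlgAut_star_apply, star_eq_conjTranspose] at h
    exact h
  have htrτ : ∑ i, ((e i : ℝ) : ℂ) = 1 := by
    have h1 : (τ * ((1 : Matrix n n ℂ))).trace = τ.trace := by rw [Matrix.mul_one]
    have h2 := trace_mul_conj_diag τ V (fun _ => (1:ℂ))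
    rw [hone] at h1
    rw [h2, hτdiag] at h1
    simp only [one_mul, diagonal_apply_eq] at h1
    rw [← hτtr, ← h1]
    rfl
  have htrτP : (τ * P).trace = 1 := by
    rw [hPdef, trace_mul_conj_diag τ V, hτdiag]
    simp only [diagonal_apply_eq]
    rw [← htrτ]
    refine Finset.sum_congr rfl fun i _ => ?_
    by_cases h : e i = 0 <;> simp [hinddef, h, Function.comp]
  -- bound trace (σ * P)
  have hσpsd : ((c : ℂ) • (1 : Matrix n n ℂ) - σ).PosSemidef := by
    set U : Matrix n n ℂ := (hσ.1.eigenvectorUnitary : Matrix n n ℂ) with hUdef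
    have hUU' : U * star U = 1 := mem_unitaryGroup_iff.mp hσ.1.eigenvectorUnitary.2
    have hsm : (c : ℂ) • (1 : Matrix n n ℂ) = U * diagonal (fun _ => (c:ℂ)) * star U := by
      rw [← Matrix.smul_one_eq_diagonal, Matrix.mul_smul, Matrix.mul_one, Matrix.smul_mul, hUU']
    have hdecomp : (c : ℂ) • (1 : Matrix n n ℂ) - σ
        = U * diagonal (fun i => (c:ℂ) - (RCLike.ofReal ∘ hσ.1.eigenvalues) i) * star U := by
      rw [hsm]
      conv_lhs => rw [hσ.1.spectral_theorem, Unitary.conjStarAlgAut_apply]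
      rw [← Matrix.sub_mul, ← Matrix.mul_sub, diagonal_sub]
    rw [hdecomp, star_eq_conjTranspose]
    refine (posSemidef_diagonal_iff.mpr fun i => ?_).mul_mul_conjTranspose_same U
    show (0:ℂ) ≤ (c : ℂ) - (RCLike.ofReal ∘ hσ.1.eigenvalues) i
    have h3 : (c : ℂ) - (RCLike.ofReal ∘ hσ.1.eigenvalues) i = ((c - hσ.1.eigenvalues i : ℝ) : ℂ) := by
      push_cast; rfl
    rw [h3]
    exact Complex.zero_le_real.mpr (by linarith [hc i])
  have hdiagbound : ∀ i, ((star V * σ * V) i i).re ≤ c := by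
    intro i
    have hcj : (star V * ((c : ℂ) • (1 : Matrix n n ℂ) - σ) * V).PosSemidef := by
      rw [star_eq_conjTranspose]
      exact hσpsd.conjTranspose_mul_mul_same V
    have hexp : star V * ((c : ℂ) • (1 : Matrix n n ℂ) - σ) * V
        = (c : ℂ) • (1 : Matrix n n ℂ) - star V * σ * V := by
      rw [Matrix.mul_sub, Matrix.sub_mul, Matrix.mul_smul, Matrix.mul_one, Matrix.smul_mul, hVV]
    have := diag_re_nonneg hcj i
    rw [hexp] at this
    simp only [Matrix.sub_apply, Matrix.smul_apply, Matrix.one_apply_eq, smul_eq_mul, mul_one,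
      Complex.sub_re, Complex.ofReal_re] at this
    linarith
  have hcard : (Finset.univ.filter (fun i => e i ≠ 0)).card ≤ r :=
    calc (Finset.univ.filter (fun i => e i ≠ 0)).card
        = Fintype.card {i // e i ≠ 0} := (Fintype.card_subtype _).symm
      _ = τ.rank := hτ.1.rank_eq_card_non_zero_eigs.symm
      _ ≤ r := hrank
  have htrσP : ((σ * P).trace).re ≤ (r : ℝ) * c := by
    rw [hPdef, trace_mul_conj_diag σ V, Complex.re_sum]
    have : ∀ i, (((ind i : ℝ) : ℂ) * (star V * σ * V) i i).re
        = ind i * ((star V * σ * V) i i).re := fun i => Complex.re_ofReal_mul _ _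
    simp only [this]
    calc ∑ i, ind i * ((star V * σ * V) i i).re
        = ∑ i ∈ Finset.univ.filter (fun i => e i ≠ 0), ((star V * σ * V) i i).re := by
          rw [Finset.sum_filter]
          refine Finset.sum_congr rfl fun i _ => ?_
          by_cases h : e i = 0 <;> simp [hinddef, h]
      _ ≤ ∑ i ∈ Finset.univ.filter (fun i => e i ≠ 0), c :=
          Finset.sum_le_sum fun i _ => hdiagbound i
      _ = (Finset.univ.filter (fun i => e i ≠ 0)).card * c := by
          rw [Finset.sum_const, nsmul_eq_mul]
      _ ≤ (r : ℝ) * c := by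
          exact mul_le_mul_of_nonneg_right (by exact_mod_cast hcard) hc0
  -- expand trace ((σ - τ) * M)
  have hexp : ((σ - τ) * M).trace = σ.trace - τ.trace - (σ * P).trace - (σ * P).trace
      + (τ * P).trace + (τ * P).trace := by
    rw [hMdef]
    have : (σ - τ) * (1 - (P + P)) = σ - τ - σ * P - σ * P + τ * P + τ * P := by noncomm_ring
    rw [this]
    simp only [Matrix.trace_add, Matrix.trace_sub]
  rw [hexp, hτtr, htrτP] at key
  simp only [Complex.add_re, Complex.sub_re, Complex.one_re] at key
  have := htrσP
  nlinarith [key, hσtr, htrσP]
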